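/- (Opposite Sign Lemma, Margulis.) Let g and h be affine transformations of ℝ³ whose linear parts A_g and A_h preserve the Lorentzian bilinear form B. Suppose there exist real numbers λ_g, λ_h > 1 and vectors w_g⁺, w_g⁻, w_g, w_h⁺, w_h⁻, w_h ∈ ℝ³ such that for each f ∈ {g,h}: A_f w_f⁺ = λ_f w_f⁺, A_f w_f⁻ = λ_f⁻¹ w_f⁻, A_f w_f = w_f, B(w_f, w_f) = 1, B(w_f⁺, w_f⁻) < 0, and the determinant of the 3×3 matrix whose columns are w_f⁺, w_f⁻, w_f is positive. Define the Margulis invariants α(g) = B(g(0), w_g) and α(h) = B(h(0), w_h). If α(g)·α(h) ≤ 0, then the subgroup of the affine group generated by g and h does not act properly discontinuously on ℝ³. -/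

import Mathlib

noncomputable section

/-- The vector space `ℝⁿ`. -/
abbrev V (n : ℕ) : Type := Fin n → ℝ

/-- The group of affine transformations of `ℝⁿ` (invertible affine self-maps). -/
abbrev Aff (n : ℕ) : Type := V n ≃ᵃ[ℝ] V n

/-- An action (given by `act`) of `Γ` on a topological space `X` is properly discontinuous if
for all compact `K L ⊆ X`, only finitely many `γ` satisfy `act γ '' K ∩ L ≠ ∅`. -/
def ProperlyDisc {Γ : Type*} {X : Type*} [TopologicalSpace X] (act : Γ → X → X) : Prop :=
  ∀ K L : Set X, IsCompact K → IsCompact L → {γ : Γ | (act γ '' K ∩ L).Nonempty}.Finite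

/-- The Lorentzian bilinear form on `ℝ³`. -/
def B3 (v w : Fin 3 → ℝ) : ℝ := v 0 * w 0 + v 1 * w 1 - v 2 * w 2

/-- The 3×3 matrix with the given three columns. -/
def colMatrix (c₀ c₁ c₂ : Fin 3 → ℝ) : Matrix (Fin 3) (Fin 3) ℝ :=
  Matrix.of fun i j => ![c₀, c₁, c₂] j i

namespace OSL

lemma B3_comm (x y : V 3) : B3 x y = B3 y x := by simp [B3]; ring

lemma B3_add_left (x y z : V 3) : B3 (x + y) z = B3 x z + B3 y z := by
  simp [B3, Pi.add_apply]; ring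

lemma B3_smul_left (a : ℝ) (x z : V 3) : B3 (a • x) z = a * B3 x z := by
  simp [B3, Pi.smul_apply, smul_eq_mul]; ring

lemma B3_add_right (x y z : V 3) : B3 x (y + z) = B3 x y + B3 x z := by
  simp [B3, Pi.add_apply]; ring

lemma B3_smul_right (a : ℝ) (x z : V 3) : B3 x (a • z) = a * B3 x z := by
  simp [B3, Pi.smul_apply, smul_eq_mul]; ring

lemma B3_neg_right (x z : V 3) : B3 x (-z) = - B3 x z := by
  simp [B3]; ring

lemma B3_sub_left (x y z : V 3) : B3 (x - y) z = B3 x z - B3 y z := by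
  simp [B3, Pi.sub_apply]; ring

lemma B3_combo (a b c : ℝ) (x y z t : V 3) :
    B3 (a • x + b • y + c • z) t = a * B3 x t + b * B3 y t + c * B3 z t := by
  simp [B3, Pi.add_apply, Pi.smul_apply, smul_eq_mul]; ring

lemma B3_zero_left (z : V 3) : B3 0 z = 0 := by simp [B3]

/-- determinant of `colMatrix` explicitly -/
lemma det_colMatrix (x y z : V 3) :
    (colMatrix x y z).det =
      x 0 * (y 1 * z 2 - y 2 * z 1) - y 0 * (x 1 * z 2 - x 2 * z 1)
        + z 0 * (x 1 * y 2 - x 2 * y 1) := by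
  simp [colMatrix, Matrix.det_fin_three]; ring

/-- the Lorentzian cross product -/
def om (x y : V 3) : V 3 :=
  ![x 1 * y 2 - x 2 * y 1, x 2 * y 0 - x 0 * y 2, -(x 0 * y 1 - x 1 * y 0)]

lemma B3_om (x y z : V 3) : B3 (om x y) z = (colMatrix x y z).det := by
  rw [det_colMatrix]; simp [om, B3]; ring

lemma om_gram (a b c d : V 3) :
    B3 (om a b) (om c d) = B3 a d * B3 b c - B3 a c * B3 b d := by
  simp [om, B3]; ring

/-- nondegeneracy -/
lemma B3_nondeg (x : V 3) (h : ∀ y, B3 x y = 0) : x = 0 := by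
  have h0 := h ![x 0, x 1, -(x 2)]
  simp [B3] at h0
  have h1 : x 0 ^ 2 + x 1 ^ 2 + x 2 ^ 2 = 0 := by nlinarith [h0]
  have e0 : x 0 = 0 := by
    have : x 0 ^ 2 = 0 := by nlinarith [sq_nonneg (x 1), sq_nonneg (x 2)]
    exact pow_eq_zero_iff two_ne_zero |>.mp this
  have e1 : x 1 = 0 := by
    have : x 1 ^ 2 = 0 := by nlinarith [sq_nonneg (x 0), sq_nonneg (x 2)]
    exact pow_eq_zero_iff two_ne_zero |>.mp this
  have e2 : x 2 = 0 := by
    have : x 2 ^ 2 = 0 := by nlinarith [sq_nonneg (x 0), sq_nonneg (x 1)]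
    exact pow_eq_zero_iff two_ne_zero |>.mp this
  funext i
  fin_cases i
  · exact e0
  · exact e1
  · exact e2

/-- two null vectors that pair to zero are parallel -/
lemma null_parallel (x y : V 3) (hx : B3 x x = 0) (hy : B3 y y = 0)
    (hxy : B3 x y = 0) (hx0 : x ≠ 0) : ∃ c : ℝ, y = c • x := by
  have e1 : x 0 * x 0 + x 1 * x 1 = x 2 * x 2 := by simp [B3] at hx; linarith
  have e2 : y 0 * y 0 + y 1 * y 1 = y 2 * y 2 := by simp [B3] at hy; linarith
  have e3 : x 0 * y 0 + x 1 * y 1 = x 2 * y 2 := by simp [B3] at hxy; linarith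
  have hx2 : x 2 ≠ 0 := by
    intro h2
    apply hx0
    rw [h2] at e1
    have f0 : x 0 = 0 := by
      have : x 0 ^ 2 = 0 := by nlinarith [sq_nonneg (x 1)]
      exact pow_eq_zero_iff two_ne_zero |>.mp this
    have f1 : x 1 = 0 := by
      have : x 1 ^ 2 = 0 := by nlinarith [sq_nonneg (x 0)]
      exact pow_eq_zero_iff two_ne_zero |>.mp this
    funext i
    fin_cases i
    · exact f0
    · exact f1
    · exact h2
  have key : (x 0 * y 1 - x 1 * y 0) ^ 2 = 0 := by
    linear_combination (y 0 * y 0 + y 1 * y 1) * e1 + (x 2 * x 2) * e2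
      + (-(x 0 * y 0 + x 1 * y 1 + x 2 * y 2)) * e3
  have key' : x 0 * y 1 - x 1 * y 0 = 0 := pow_eq_zero_iff two_ne_zero |>.mp key
  have hy0 : y 0 * (x 2 * x 2) = x 0 * y 2 * x 2 := by
    linear_combination (-(y 0)) * e1 + x 0 * e3 + (-(x 1)) * key'
  have hy1 : y 1 * (x 2 * x 2) = x 1 * y 2 * x 2 := by
    linear_combination (-(y 1)) * e1 + x 1 * e3 + x 0 * key'
  refine ⟨y 2 / x 2, ?_⟩
  funext i
  fin_cases i
  · show y 0 = y 2 / x 2 * x 0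
    have hc : y 0 * x 2 = x 0 * y 2 := mul_right_cancel₀ hx2 (by linear_combination hy0)
    rw [div_mul_eq_mul_div, eq_div_iff hx2]
    linear_combination hc
  · show y 1 = y 2 / x 2 * x 1
    have hc : y 1 * x 2 = x 1 * y 2 := mul_right_cancel₀ hx2 (by linear_combination hy1)
    rw [div_mul_eq_mul_div, eq_div_iff hx2]
    linear_combination hc
  · show y 2 = y 2 / x 2 * x 2
    field_simp

/-- quadratic Bernoulli -/
lemma quad_bernoulli (d : ℝ) (hd : 0 ≤ d) :
    ∀ n : ℕ, 1 + n * d + (n * (n - 1) / 2) * d ^ 2 ≤ (1 + d) ^ n := by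
  intro n
  induction n with
  | zero => simp
  | succ n ih =>
    have h1 : (0:ℝ) ≤ (1 + d) ^ n := by positivity
    have hn : (0:ℝ) ≤ (n:ℝ) * ((n:ℝ) - 1) := by
      rcases Nat.eq_zero_or_pos n with h | h
      · simp [h]
      · have : (1:ℝ) ≤ (n:ℝ) := by exact_mod_cast h
        nlinarith
    have step : (1 + d) ^ (n + 1) = (1 + d) * (1 + d) ^ n := by ring
    rw [step]
    have h2 : (1 + d) * (1 + n * d + (n * (n - 1) / 2) * d ^ 2) ≤ (1 + d) * (1 + d) ^ n :=
      mul_le_mul_of_nonneg_left ih (by linarith)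
    have h3 : 1 + (n+1 : ℕ) * d + ((n+1 : ℕ) * ((n+1 : ℕ) - 1) / 2) * d ^ 2
        ≤ (1 + d) * (1 + n * d + (n * (n - 1) / 2) * d ^ 2) := by
      push_cast
      nlinarith [mul_nonneg hn (pow_nonneg hd 3), mul_nonneg hn hd]
    linarith

end OSL

namespace OSL

structure HypData where
  F : Aff 3
  P : V 3
  M : V 3
  W : V 3
  l : ℝ
  hl : 1 < l
  hinv : ∀ a b, B3 (F.linear a) (F.linear b) = B3 a b
  hP : F.linear P = l • P
  hM : F.linear M = l⁻¹ • M
  hW : F.linear W = W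
  hWu : B3 W W = 1
  hPM : B3 P M < 0
  hdet : 0 < (colMatrix P M W).det

namespace HypData

variable (D : HypData)

def α : ℝ := B3 (D.F 0) D.W

lemma lpos : 0 < D.l := lt_trans one_pos D.hl
lemma lne : D.l ≠ 0 := ne_of_gt D.lpos
lemma linv_pos : 0 < D.l⁻¹ := inv_pos.mpr D.lpos
lemma linv_lt_one : D.l⁻¹ < 1 := by
  have h := mul_lt_mul_of_pos_left D.hl (inv_pos.mpr D.lpos)
  rwa [inv_mul_cancel₀ D.lne, mul_one] at h
lemma hPMne : B3 D.P D.M ≠ 0 := ne_of_lt D.hPM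

lemma BPP : B3 D.P D.P = 0 := by
  have h := D.hinv D.P D.P
  rw [D.hP, B3_smul_left, B3_smul_right] at h
  have hf : B3 D.P D.P * (D.l ^ 2 - 1) = 0 := by linear_combination h
  have hl2 : D.l ^ 2 - 1 > 0 := by nlinarith [D.hl]
  exact (mul_eq_zero.mp hf).resolve_right (ne_of_gt hl2)

lemma BMM : B3 D.M D.M = 0 := by
  have h := D.hinv D.M D.M
  rw [D.hM, B3_smul_left, B3_smul_right] at h
  have hf : B3 D.M D.M * (D.l⁻¹ ^ 2 - 1) = 0 := by linear_combination h
  have hl2 : D.l⁻¹ ^ 2 - 1 < 0 := by nlinarith [D.linv_lt_one, D.linv_pos]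
  exact (mul_eq_zero.mp hf).resolve_right (ne_of_lt hl2)

lemma BPW : B3 D.P D.W = 0 := by
  have h := D.hinv D.P D.W
  rw [D.hP, D.hW, B3_smul_left] at h
  have hf : B3 D.P D.W * (D.l - 1) = 0 := by linear_combination h
  have : D.l - 1 > 0 := by linarith [D.hl]
  exact (mul_eq_zero.mp hf).resolve_right (ne_of_gt this)

lemma BMW : B3 D.M D.W = 0 := by
  have h := D.hinv D.M D.W
  rw [D.hM, D.hW, B3_smul_left] at h
  have hf : B3 D.M D.W * (D.l⁻¹ - 1) = 0 := by linear_combination h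
  have : D.l⁻¹ - 1 < 0 := by linarith [D.linv_lt_one]
  exact (mul_eq_zero.mp hf).resolve_right (ne_of_lt this)

lemma Pne : D.P ≠ 0 := by
  intro h
  have := D.hPM
  rw [h, B3_zero_left] at this
  exact lt_irrefl 0 this

lemma Mne : D.M ≠ 0 := by
  intro h
  have := D.hPM
  rw [h, B3_comm, B3_zero_left] at this
  exact lt_irrefl 0 this

lemma Wne : D.W ≠ 0 := by
  intro h
  have := D.hWu
  rw [h, B3_zero_left] at this
  norm_num at this

lemma detne : (colMatrix D.P D.M D.W).det ≠ 0 := ne_of_gt D.hdet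

/-- every vector decomposes in the frame -/
lemma exists_coords (x : V 3) : ∃ a b c : ℝ, x = a • D.P + b • D.M + c • D.W := by
  set N := colMatrix D.P D.M D.W with hN
  have hu : IsUnit N.det := isUnit_iff_ne_zero.mpr D.detne
  set v := N⁻¹.mulVec x with hv
  refine ⟨v 0, v 1, v 2, ?_⟩
  have h1 : N.mulVec v = x := by
    rw [hv, Matrix.mulVec_mulVec, Matrix.mul_nonsing_inv _ hu, Matrix.one_mulVec]
  funext i
  have h2 := congrFun h1 i
  rw [Matrix.mulVec, dotProduct] at h2
  rw [Fin.sum_univ_three] at h2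
  simp only [hN, colMatrix, Matrix.of_apply, Matrix.cons_val_zero, Matrix.cons_val_one,
    Matrix.head_cons, Matrix.cons_val_two, Matrix.tail_cons] at h2
  simp only [Pi.add_apply, Pi.smul_apply, smul_eq_mul]
  linarith [h2]

def cp (x : V 3) : ℝ := B3 x D.M / B3 D.P D.M
def cm (x : V 3) : ℝ := B3 x D.P / B3 D.P D.M
def c0 (x : V 3) : ℝ := B3 x D.W

lemma cp_eval (a b c : ℝ) : D.cp (a • D.P + b • D.M + c • D.W) = a := by
  unfold cp
  rw [B3_combo, D.BMM]
  rw [show B3 D.W D.M = 0 from by rw [B3_comm]; exact D.BMW]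
  field_simp [D.hPMne]
  ring

lemma cm_eval (a b c : ℝ) : D.cm (a • D.P + b • D.M + c • D.W) = b := by
  unfold cm
  rw [B3_combo, D.BPP]
  rw [show B3 D.M D.P = B3 D.P D.M from B3_comm _ _]
  rw [show B3 D.W D.P = 0 from by rw [B3_comm]; exact D.BPW]
  field_simp [D.hPMne]
  ring

lemma c0_eval (a b c : ℝ) : D.c0 (a • D.P + b • D.M + c • D.W) = c := by
  unfold c0
  rw [B3_combo, D.BPW, D.BMW, D.hWu]
  ring

lemma repr (x : V 3) : x = D.cp x • D.P + D.cm x • D.M + D.c0 x • D.W := by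
  obtain ⟨a, b, c, h⟩ := D.exists_coords x
  rw [h, D.cp_eval, D.cm_eval, D.c0_eval]

lemma cp_add (x y : V 3) : D.cp (x + y) = D.cp x + D.cp y := by
  unfold cp; rw [B3_add_left]; ring
lemma cp_smul (r : ℝ) (x : V 3) : D.cp (r • x) = r * D.cp x := by
  unfold cp; rw [B3_smul_left]; ring
lemma cm_add (x y : V 3) : D.cm (x + y) = D.cm x + D.cm y := by
  unfold cm; rw [B3_add_left]; ring
lemma cm_smul (r : ℝ) (x : V 3) : D.cm (r • x) = r * D.cm x := by
  unfold cm; rw [B3_smul_left]; ring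
lemma c0_add (x y : V 3) : D.c0 (x + y) = D.c0 x + D.c0 y := by
  unfold c0; rw [B3_add_left]
lemma c0_smul (r : ℝ) (x : V 3) : D.c0 (r • x) = r * D.c0 x := by
  unfold c0; rw [B3_smul_left]

/-- affine decomposition -/
lemma apply_add (x u : V 3) : D.F (x + u) = D.F x + D.F.linear u := by
  have h := D.F.map_vadd x u
  simp only [vadd_eq_add] at h
  rw [add_comm x u, h, add_comm]

lemma apply_eq (x : V 3) : D.F x = D.F.linear x + D.F 0 := by
  have h := D.F.map_vadd 0 x
  simp only [vadd_eq_add, add_zero] at h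
  exact h

/-- cocycle identity -/
lemma cocycle (x : V 3) : B3 (D.F x) D.W = B3 x D.W + D.α := by
  rw [D.apply_eq x, B3_add_left]
  congr 1
  calc B3 (D.F.linear x) D.W = B3 (D.F.linear x) (D.F.linear D.W) := by rw [D.hW]
    _ = B3 x D.W := D.hinv x D.W

lemma cocycle_pow (j : ℕ) : ∀ x : V 3, B3 ((D.F ^ j) x) D.W = B3 x D.W + j * D.α := by
  induction j with
  | zero => intro x; simp
  | succ n ih =>
    intro x
    have hev : (D.F ^ (n+1)) x = (D.F ^ n) (D.F x) := by rw [pow_succ]; rfl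
    rw [hev, ih (D.F x), D.cocycle]
    push_cast
    ring

/-- existence of an axis point -/
lemma axis : ∃ p : V 3, D.F p = p + D.α • D.W := by
  obtain ⟨a, b, c, hb⟩ := D.exists_coords (D.F 0)
  have hc : c = D.α := by
    have := congrArg D.c0 hb
    rw [D.c0_eval] at this
    rw [← this]; rfl
  have h1l : (1:ℝ) - D.l ≠ 0 := by have := D.hl; intro h; linarith
  have hl1 : D.l - 1 ≠ 0 := by have := D.hl; intro h; linarith
  refine ⟨(a / (1 - D.l)) • D.P + ((D.l * b) / (D.l - 1)) • D.M, ?_⟩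
  rw [D.apply_eq]
  rw [map_add, map_smul, map_smul, D.hP, D.hM, hb, hc]
  match_scalars
  · field_simp
    ring
  · field_simp [D.lne, hl1]
    ring
  · ring

/-- one-step formula at an axis point -/
lemma step (p : V 3) (hp : D.F p = p + D.α • D.W) (a b c : ℝ) :
    D.F (p + a • D.P + b • D.M + c • D.W)
      = p + (D.l * a) • D.P + (D.l⁻¹ * b) • D.M + (c + D.α) • D.W := by
  have h1 : p + a • D.P + b • D.M + c • D.W = p + (a • D.P + b • D.M + c • D.W) := by
    simp [add_assoc]
  rw [h1, D.apply_add, hp, map_add, map_add, map_smul, map_smul, map_smul,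
    D.hP, D.hM, D.hW]
  match_scalars <;> ring

/-- iteration formula at an axis point -/
lemma iter (p : V 3) (hp : D.F p = p + D.α • D.W) (m : ℕ) (a b c : ℝ) :
    (D.F ^ m) (p + a • D.P + b • D.M + c • D.W)
      = p + (D.l ^ m * a) • D.P + (D.l⁻¹ ^ m * b) • D.M + (c + m * D.α) • D.W := by
  induction m generalizing a b c with
  | zero => simp
  | succ n ih =>
    have hev : ∀ x, (D.F ^ (n+1)) x = (D.F ^ n) (D.F x) := by
      intro x; rw [pow_succ]; rfl
    rw [hev, D.step p hp, ih]
    match_scalars <;> push_cast <;> ring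

/-- inverse data -/
def inv : HypData where
  F := D.F⁻¹
  P := D.M
  M := D.P
  W := -D.W
  l := D.l
  hl := D.hl
  hinv := by
    intro a b
    have h2 : (D.F⁻¹).linear = (D.F.linear).symm := rfl
    calc B3 ((D.F⁻¹).linear a) ((D.F⁻¹).linear b)
        = B3 (D.F.linear ((D.F⁻¹).linear a)) (D.F.linear ((D.F⁻¹).linear b)) := by
          rw [D.hinv]
      _ = B3 a b := by rw [h2, LinearEquiv.apply_symm_apply, LinearEquiv.apply_symm_apply]
  hP := by
    have h2 : (D.F⁻¹).linear = (D.F.linear).symm := rfl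
    rw [h2]
    have : D.F.linear (D.l • D.M) = D.M := by
      rw [map_smul, D.hM, smul_smul, mul_inv_cancel₀ D.lne, one_smul]
    conv_lhs => rw [← this]
    rw [LinearEquiv.symm_apply_apply]
  hM := by
    have h2 : (D.F⁻¹).linear = (D.F.linear).symm := rfl
    rw [h2]
    have : D.F.linear (D.l⁻¹ • D.P) = D.P := by
      rw [map_smul, D.hP, smul_smul, inv_mul_cancel₀ D.lne, one_smul]
    conv_lhs => rw [← this]
    rw [LinearEquiv.symm_apply_apply]
  hW := by
    have h2 : (D.F⁻¹).linear = (D.F.linear).symm := rfl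
    rw [h2, map_neg]
    have : D.F.linear D.W = D.W := D.hW
    conv_lhs => rw [← this, LinearEquiv.symm_apply_apply]
  hWu := by rw [B3_neg_right, B3_comm, B3_neg_right, B3_comm, D.hWu]; ring
  hPM := by rw [B3_comm]; exact D.hPM
  hdet := by
    have h := D.hdet
    rw [det_colMatrix] at h ⊢
    simp only [Pi.neg_apply]
    nlinarith [h]

lemma inv_α : D.inv.α = D.α := by
  unfold α
  show B3 (D.F⁻¹ 0) (-D.W) = B3 (D.F 0) D.W
  have h : D.F (D.F⁻¹ 0) = 0 := by
    show D.F (D.F.symm 0) = 0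
    exact D.F.apply_symm_apply 0
  have hc := D.cocycle (D.F⁻¹ 0)
  rw [h] at hc
  rw [B3_neg_right]
  have h0 : B3 (0 : V 3) D.W = 0 := B3_zero_left _
  unfold α at hc
  rw [h0] at hc
  linarith [hc]

end HypData
end OSL

namespace OSL

lemma B3_combo_right (a b c : ℝ) (x y z t : V 3) :
    B3 t (a • x + b • y + c • z) = a * B3 t x + b * B3 t y + c * B3 t z := by
  simp [B3, Pi.add_apply, Pi.smul_apply, smul_eq_mul]; ring

lemma det_rot (x y z : V 3) : (colMatrix y z x).det = (colMatrix x y z).det := by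
  rw [det_colMatrix, det_colMatrix]; ring

lemma det_swap23 (x y z : V 3) : (colMatrix x z y).det = -(colMatrix x y z).det := by
  rw [det_colMatrix, det_colMatrix]; ring

lemma det_dup13 (x y : V 3) : (colMatrix x y x).det = 0 := by
  rw [det_colMatrix]; ring

lemma det_dup23 (x y : V 3) : (colMatrix x y y).det = 0 := by
  rw [det_colMatrix]; ring

lemma smul_cancel (a b : ℝ) (x : V 3) (hx : x ≠ 0) (h : a • x = b • x) : a = b := by
  have h2 : (a - b) • x = 0 := by rw [sub_smul, h, sub_self]
  rcases smul_eq_zero.mp h2 with h3 | h3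
  · linarith [sub_eq_zero.mp (by linarith [h3] : a - b = 0)]
  · exact absurd h3 hx

namespace HypData

lemma eq_of_pairings (D : HypData) (x : V 3) (hp : B3 x D.P = 0) (hm : B3 x D.M = 0)
    (hw : B3 x D.W = 0) : x = 0 := by
  apply B3_nondeg
  intro y
  obtain ⟨a, b, c, hy⟩ := D.exists_coords y
  rw [hy, B3_combo_right, hp, hm, hw]
  ring

/-- the key sign identity : σ = +1 -/
lemma sigma_eq_one (D E : HypData) (ht : B3 E.P D.M ≠ 0) :
    B3 E.W D.W - B3 E.W D.M / B3 E.P D.M * B3 E.P D.W = 1 := by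
  set μ : ℝ := B3 E.W D.M / B3 E.P D.M with hμ
  set u : V 3 := E.W + (-μ) • E.P with hu
  have hσ : B3 u D.W = B3 E.W D.W - μ * B3 E.P D.W := by
    rw [hu, B3_add_left, B3_smul_left]; ring
  rw [← hσ]
  -- unit norm
  have hWP : B3 E.W E.P = 0 := by rw [B3_comm]; exact E.BPW
  have huu : B3 u u = 1 := by
    rw [hu]
    simp only [B3_add_left, B3_add_right, B3_smul_left, B3_smul_right]
    rw [E.hWu, E.BPP, E.BPW, hWP]
    ring
  -- decomposition of u in the D-frame
  have hcp : B3 u D.M = 0 := by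
    rw [hu, B3_add_left, B3_smul_left, hμ]
    field_simp
    ring
  have hcpu : D.cp u = 0 := by unfold HypData.cp; rw [hcp]; simp
  set mm : ℝ := D.cm u with hmm
  set cc : ℝ := D.c0 u with hcc
  have hrepr : u = mm • D.M + cc • D.W := by
    have h := D.repr u
    rw [hcpu, zero_smul, zero_add] at h
    exact h
  have hWM : B3 D.W D.M = 0 := by rw [B3_comm]; exact D.BMW
  have hsq : cc ^ 2 = 1 := by
    have h2 : B3 u u = cc ^ 2 := by
      rw [hrepr]
      simp only [B3_add_left, B3_add_right, B3_smul_left, B3_smul_right]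
      rw [D.BMM, D.BMW, hWM, D.hWu]
      ring
    rw [← h2, huu]
  have hccσ : cc = B3 u D.W := rfl
  -- positivity via the cross-product identities
  have homMW : om D.M D.W = ((colMatrix D.P D.M D.W).det / B3 D.P D.M) • D.M := by
    rw [← sub_eq_zero]
    apply D.eq_of_pairings
    · rw [B3_sub_left, B3_smul_left, B3_om, det_rot]
      rw [show B3 D.M D.P = B3 D.P D.M from B3_comm _ _]
      field_simp [D.hPMne]
      ring
    · rw [B3_sub_left, B3_smul_left, B3_om]
      rw [show (colMatrix D.M D.W D.M).det = 0 from det_dup13 _ _, D.BMM]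
      ring
    · rw [B3_sub_left, B3_smul_left, B3_om]
      rw [show (colMatrix D.M D.W D.W).det = 0 from det_dup23 _ _, D.BMW]
      ring
  have homvw : om E.P E.W = (-(colMatrix E.P E.M E.W).det / B3 E.P E.M) • E.P := by
    rw [← sub_eq_zero]
    apply E.eq_of_pairings
    · rw [B3_sub_left, B3_smul_left, B3_om]
      rw [show (colMatrix E.P E.W E.P).det = 0 from det_dup13 _ _, E.BPP]
      ring
    · rw [B3_sub_left, B3_smul_left, B3_om, det_swap23]
      field_simp [E.hPMne]
      ring
    · rw [B3_sub_left, B3_smul_left, B3_om]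
      rw [show (colMatrix E.P E.W E.W).det = 0 from det_dup23 _ _, E.BPW]
      ring
  have hgram := om_gram E.P E.W D.M D.W
  rw [homMW, homvw, B3_smul_left, B3_smul_right] at hgram
  -- hgram : (−detE/BvM') * ((detD/κ) * B3 E.P D.M) = B3 E.P D.W * B3 E.W D.M − B3 E.P D.M * B3 E.W D.W
  have hμ2 : μ * B3 E.P D.M = B3 E.W D.M := by rw [hμ]; field_simp
  have hσval : B3 u D.W * B3 E.P D.M =
      ((colMatrix E.P E.M E.W).det / B3 E.P E.M) * ((colMatrix D.P D.M D.W).det / B3 D.P D.M)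
        * B3 E.P D.M := by
    rw [hσ]
    linear_combination hgram - B3 E.P D.W * hμ2
  have hσeq : B3 u D.W =
      ((colMatrix E.P E.M E.W).det / B3 E.P E.M) * ((colMatrix D.P D.M D.W).det / B3 D.P D.M) :=
    mul_right_cancel₀ ht hσval
  have hpos : 0 < B3 u D.W := by
    rw [hσeq]
    have f1 : (colMatrix E.P E.M E.W).det / B3 E.P E.M < 0 :=
      div_neg_of_pos_of_neg E.hdet E.hPM
    have f2 : (colMatrix D.P D.M D.W).det / B3 D.P D.M < 0 :=
      div_neg_of_pos_of_neg D.hdet D.hPM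
    exact mul_pos_of_neg_of_neg f1 f2
  -- conclude
  have h3 : (B3 u D.W - 1) * (B3 u D.W + 1) = 0 := by
    have : B3 u D.W ^ 2 = 1 := by rw [← hccσ]; exact hsq
    linear_combination this
  rcases mul_eq_zero.mp h3 with h4 | h4
  · linarith [sub_eq_zero.mp (by linarith [h4] : B3 u D.W - 1 = 0)]
  · linarith

end HypData

/-- glue: an infinite family with uniformly recurrent points contradicts proper discontinuity -/
lemma glue (S : Subgroup (Aff 3)) (c : ℕ → Aff 3) (hmem : ∀ n, c n ∈ S)
    (hinj : Function.Injective c) (x : ℕ → V 3) (p q : V 3) (r R : ℝ)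
    (hx : ∀ n, dist (x n) p ≤ r) (hcx : ∀ n, dist (c n (x n)) q ≤ R) :
    ¬ ProperlyDisc (fun (γ : S) (y : V 3) => (γ : Aff 3) y) := by
  intro hPD
  have hfin := hPD (Metric.closedBall p r) (Metric.closedBall q R)
    (isCompact_closedBall p r) (isCompact_closedBall q R)
  have hinj2 : Function.Injective (fun n => (⟨c n, hmem n⟩ : S)) := by
    intro m n h
    apply hinj
    exact congrArg Subtype.val h
  have hsub : Set.range (fun n => (⟨c n, hmem n⟩ : S)) ⊆
      {γ : S | ((fun (γ : S) (y : V 3) => (γ : Aff 3) y) γ '' Metric.closedBall p r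
        ∩ Metric.closedBall q R).Nonempty} := by
    rintro γ ⟨n, rfl⟩
    exact ⟨c n (x n), ⟨x n, Metric.mem_closedBall.mpr (hx n), rfl⟩,
      Metric.mem_closedBall.mpr (hcx n)⟩
  exact (Set.infinite_range_of_injective hinj2) (hfin.subset hsub)

/-- zero Margulis invariant case -/
lemma zerocase (S : Subgroup (Aff 3)) (D : HypData) (hFS : D.F ∈ S) (hα : D.α = 0) :
    ¬ ProperlyDisc (fun (γ : S) (y : V 3) => (γ : Aff 3) y) := by
  obtain ⟨p, hp⟩ := D.axis
  have hfix : ∀ n : ℕ, (D.F ^ n) p = p := by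
    intro n
    have h := D.iter p hp n 0 0 0
    rw [hα] at h
    simpa using h
  have haux : ∀ m n : ℕ, m < n → D.F ^ m ≠ D.F ^ n := by
    intro m n hlt heq
    have hδpos : n - m ≠ 0 := Nat.sub_ne_zero_of_lt hlt
    have hδ : D.F ^ (n - m) = 1 := by
      have h1 : D.F ^ m * D.F ^ (n - m) = D.F ^ m * 1 := by
        rw [mul_one, ← pow_add, Nat.add_sub_cancel' (le_of_lt hlt)]
        exact heq.symm
      exact mul_left_cancel h1
    have hev := D.iter p hp (n - m) 1 0 0
    rw [hδ, hα] at hev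
    simp only [mul_zero, zero_smul, add_zero, mul_one, Nat.cast_zero, zero_add,
      zero_mul] at hev
    have hev2 : p + (1:ℝ) • D.P = p + (D.l ^ (n - m)) • D.P := by
      have h1 : (1 : Aff 3) (p + (1:ℝ) • D.P) = p + (1:ℝ) • D.P := rfl
      rw [one_smul] at h1 ⊢
      rw [← h1]
      convert hev using 2
      simp
    have h3 : (1:ℝ) = D.l ^ (n - m) := smul_cancel _ _ _ D.Pne (add_left_cancel hev2)
    have h4 : 1 < D.l ^ (n - m) := one_lt_pow₀ D.hl hδpos
    linarith
  have hinj : Function.Injective (fun n : ℕ => D.F ^ n) := by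
    intro m n h
    rcases lt_trichotomy m n with h1 | h1 | h1
    · exact absurd h (haux m n h1)
    · exact h1
    · exact absurd h.symm (haux n m h1)
  apply glue S (fun n => D.F ^ n) (fun n => pow_mem hFS n) hinj (fun _ => p) p p 0 0
  · intro n; simp
  · intro n
    simp only [hfix]
    simp

end OSL

namespace OSL
namespace HypData

/-- the central exact computation: image of the adapted point under `F_D^mk ∘ F_E^k` -/
lemma keycomp (D E : HypData) (ht : B3 E.P D.M ≠ 0) (p₁ p₂ : V 3)
    (hp₁ : D.F p₁ = p₁ + D.α • D.W) (hp₂ : E.F p₂ = p₂ + E.α • E.W)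
    (k mk : ℕ) :
    (D.F ^ mk * E.F ^ k)
      (p₂ + (-(D.cp (p₂ - p₁) + k * (E.α * D.cp E.W)) / (E.l ^ k * D.cp E.P)) • E.P)
    = p₁ + ((D.l⁻¹) ^ mk * ((D.cm (p₂ - p₁) - D.cp (p₂ - p₁) * D.cm E.P / D.cp E.P)
          + k * (E.α * D.cm E.W - (E.α * D.cp E.W) * D.cm E.P / D.cp E.P))) • D.M
        + (((D.c0 (p₂ - p₁) - D.cp (p₂ - p₁) * D.c0 E.P / D.cp E.P) + k * E.α)
            + mk * D.α) • D.W := by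
  have hκD : B3 D.P D.M ≠ 0 := D.hPMne
  have hpv : D.cp E.P ≠ 0 := by
    unfold cp
    exact div_ne_zero ht hκD
  have hnu : E.l ^ k ≠ 0 := pow_ne_zero _ E.lne
  set tt : ℝ := -(D.cp (p₂ - p₁) + k * (E.α * D.cp E.W)) / (E.l ^ k * D.cp E.P) with htt
  -- step 1 : inner iteration
  have h2 : (E.F ^ k) (p₂ + tt • E.P) = p₂ + (E.l ^ k * tt) • E.P + (k * E.α) • E.W := by
    have h := E.iter p₂ hp₂ k tt 0 0
    simp only [mul_zero, zero_smul, add_zero, zero_add] at h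
    exact h
  -- step 2 : the inner-expansion coefficient
  have hnut : E.l ^ k * tt = -(D.cp (p₂ - p₁) + k * (E.α * D.cp E.W)) / D.cp E.P := by
    rw [htt]
    field_simp
  set y : V 3 := p₂ + (E.l ^ k * tt) • E.P + (k * E.α) • E.W with hy
  have hz : y - p₁ = (p₂ - p₁) + (E.l ^ k * tt) • E.P + (k * E.α) • E.W := by
    rw [hy]; abel
  -- coordinates of y - p₁ in the D-frame
  have hcp : D.cp (y - p₁) = 0 := by
    rw [hz, D.cp_add, D.cp_add, D.cp_smul, D.cp_smul, hnut]
    field_simp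
    ring
  have hcm : D.cm (y - p₁) = (D.cm (p₂ - p₁) - D.cp (p₂ - p₁) * D.cm E.P / D.cp E.P)
      + k * (E.α * D.cm E.W - (E.α * D.cp E.W) * D.cm E.P / D.cp E.P) := by
    rw [hz, D.cm_add, D.cm_add, D.cm_smul, D.cm_smul, hnut]
    field_simp
    ring
  have hc0 : D.c0 (y - p₁) = (D.c0 (p₂ - p₁) - D.cp (p₂ - p₁) * D.c0 E.P / D.cp E.P)
      + k * E.α := by
    have hσ : B3 E.W D.W - B3 E.W D.M / B3 E.P D.M * B3 E.P D.W = 1 := sigma_eq_one D E ht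
    have hσ' : D.c0 E.W - D.cp E.W * D.c0 E.P / D.cp E.P = 1 := by
      unfold cp c0
      rw [show B3 E.W D.M / B3 D.P D.M * B3 E.P D.W / (B3 E.P D.M / B3 D.P D.M)
          = B3 E.W D.M / B3 E.P D.M * B3 E.P D.W from by field_simp]
      exact hσ
    rw [hz, D.c0_add, D.c0_add, D.c0_smul, D.c0_smul, hnut]
    have hexp : -(D.cp (p₂ - p₁) + ↑k * (E.α * D.cp E.W)) / D.cp E.P * D.c0 E.P
        = -(D.cp (p₂ - p₁) * D.c0 E.P / D.cp E.P)
          - k * (E.α * (D.cp E.W * D.c0 E.P / D.cp E.P)) := by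
      field_simp
      ring
    rw [hexp]
    linear_combination (k : ℝ) * E.α * hσ'
  -- step 3 : rebase y at p₁ and apply the outer iteration
  have h3 : y = p₁ + D.cp (y - p₁) • D.P + D.cm (y - p₁) • D.M + D.c0 (y - p₁) • D.W := by
    have h := D.repr (y - p₁)
    have h4 : p₁ + (y - p₁) = y := by abel
    calc y = p₁ + (y - p₁) := h4.symm
      _ = p₁ + (D.cp (y - p₁) • D.P + D.cm (y - p₁) • D.M + D.c0 (y - p₁) • D.W) := by rw [← h]
      _ = p₁ + D.cp (y - p₁) • D.P + D.cm (y - p₁) • D.M + D.c0 (y - p₁) • D.W := by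
          simp [add_assoc]
  have hmul : (D.F ^ mk * E.F ^ k) (p₂ + tt • E.P) = (D.F ^ mk) ((E.F ^ k) (p₂ + tt • E.P)) :=
    rfl
  rw [hcp, hcm, hc0] at h3
  rw [hmul, h2, h3, D.iter p₁ hp₁ mk]
  simp only [mul_zero, zero_smul, add_zero, zero_add]

end HypData
end OSL

namespace OSL
namespace HypData

lemma rebase (D : HypData) (q p₁ : V 3) :
    q = p₁ + D.cp (q - p₁) • D.P + D.cm (q - p₁) • D.M + D.c0 (q - p₁) • D.W := by
  have h := D.repr (q - p₁)
  have h4 : p₁ + (q - p₁) = q := by abel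
  calc q = p₁ + (q - p₁) := h4.symm
    _ = p₁ + (D.cp (q - p₁) • D.P + D.cm (q - p₁) • D.M + D.c0 (q - p₁) • D.W) := by rw [← h]
    _ = p₁ + D.cp (q - p₁) • D.P + D.cm (q - p₁) • D.M + D.c0 (q - p₁) • D.W := by
        simp [add_assoc]

lemma iter_shift (D : HypData) (p₁ : V 3) (hp₁ : D.F p₁ = p₁ + D.α • D.W)
    (j : ℕ) (z : V 3) (c : ℝ) :
    (D.F ^ j) (z + c • D.P) = (D.F ^ j) z + (D.l ^ j * c) • D.P := by
  have hz := D.rebase z p₁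
  have h2 : z + c • D.P = p₁ + (D.cp (z - p₁) + c) • D.P + D.cm (z - p₁) • D.M
      + D.c0 (z - p₁) • D.W := by
    conv_lhs => rw [hz]
    module
  have h3 : (D.F ^ j) z = p₁ + (D.l ^ j * D.cp (z - p₁)) • D.P
      + (D.l⁻¹ ^ j * D.cm (z - p₁)) • D.M + (D.c0 (z - p₁) + j * D.α) • D.W := by
    conv_lhs => rw [hz]
    exact D.iter p₁ hp₁ j _ _ _
  rw [h2, D.iter p₁ hp₁ j, h3]
  match_scalars <;> ring

end HypData
end OSL

namespace OSL

open HypData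

set_option maxHeartbeats 1000000 in
lemma master (S : Subgroup (Aff 3)) (D E : HypData)
    (hDS : D.F ∈ S) (hES : E.F ∈ S) (hαD : 0 < D.α) (hαE : E.α < 0)
    (ht : B3 E.P D.M ≠ 0) :
    ¬ ProperlyDisc (fun (γ : S) (y : V 3) => (γ : Aff 3) y) := by
  obtain ⟨p₁, hp₁⟩ := D.axis
  obtain ⟨p₂, hp₂⟩ := E.axis
  have hκD : B3 D.P D.M ≠ 0 := D.hPMne
  have hpv : D.cp E.P ≠ 0 := by
    unfold HypData.cp
    exact div_ne_zero ht hκD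
  have hnαE : 0 < -E.α := neg_pos.mpr hαE
  have hdD : 0 < D.l - 1 := by linarith [D.hl]
  have hdE : 0 < E.l - 1 := by linarith [E.hl]
  obtain ⟨A₁, hA1⟩ : ∃ x : ℝ, x = D.cp (p₂ - p₁) := ⟨_, rfl⟩
  obtain ⟨A₂, hA2⟩ : ∃ x : ℝ, x = E.α * D.cp E.W := ⟨_, rfl⟩
  obtain ⟨ee, hee⟩ : ∃ x : ℝ, x = D.c0 (p₂ - p₁) - A₁ * D.c0 E.P / D.cp E.P := ⟨_, rfl⟩
  obtain ⟨Q₁, hQ1⟩ : ∃ x : ℝ, x = D.cm (p₂ - p₁) - A₁ * D.cm E.P / D.cp E.P := ⟨_, rfl⟩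
  obtain ⟨Q₂, hQ2⟩ : ∃ x : ℝ, x = E.α * D.cm E.W - A₂ * D.cm E.P / D.cp E.P := ⟨_, rfl⟩
  obtain ⟨mfun, hmfun⟩ : ∃ f : ℕ → ℕ, f = fun k : ℕ => ⌈(-ee - k * E.α) / D.α⌉₊ := ⟨_, rfl⟩
  obtain ⟨tfun, htfun⟩ : ∃ f : ℕ → ℝ, f = fun k : ℕ => -(A₁ + k * A₂) / (E.l ^ k * D.cp E.P) := ⟨_, rfl⟩
  have hKC : ∀ k : ℕ, (D.F ^ (mfun k) * E.F ^ k) (p₂ + tfun k • E.P)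
      = p₁ + ((D.l⁻¹) ^ (mfun k) * (Q₁ + k * Q₂)) • D.M
          + ((ee + k * E.α) + (mfun k) * D.α) • D.W := by
    intro k
    simp only [htfun, hmfun, hQ1, hQ2, hee, hA1, hA2]
    exact keycomp D E ht p₁ p₂ hp₁ hp₂ k _
  -- ===== injectivity =====
  have hmono : ∀ k k' : ℕ, k ≤ k' → mfun k ≤ mfun k' := by
    intro k k' hkk
    simp only [hmfun]
    apply Nat.ceil_mono
    have h1 : (k : ℝ) ≤ (k' : ℝ) := Nat.cast_le.mpr hkk
    have h2 : -ee - k * E.α ≤ -ee - k' * E.α := by nlinarith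
    gcongr
  have haux : ∀ k k' : ℕ, k < k' →
      D.F ^ (mfun k) * E.F ^ k ≠ D.F ^ (mfun k') * E.F ^ k' := by
    intro k k' hkk heq
    have hmle : mfun k ≤ mfun k' := hmono k k' (le_of_lt hkk)
    set j : ℕ := mfun k' - mfun k with hj
    set δ : ℕ := k' - k with hδ
    have hδ0 : δ ≠ 0 := Nat.sub_ne_zero_of_lt hkk
    have hδR : (δ : ℝ) ≠ 0 := Nat.cast_ne_zero.mpr hδ0
    have hmk' : mfun k' = mfun k + j := by rw [hj]; omega
    have hk'e : k' = δ + k := by rw [hδ]; omega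
    have heq2 : D.F ^ (mfun k) * E.F ^ k
        = (D.F ^ (mfun k) * D.F ^ j) * (E.F ^ δ * E.F ^ k) := by
      rw [← pow_add, ← pow_add, ← hmk', ← hk'e]
      exact heq
    have hone : D.F ^ j * E.F ^ δ = 1 := by
      have h3 : D.F ^ (mfun k) * E.F ^ k
          = D.F ^ (mfun k) * ((D.F ^ j * E.F ^ δ) * E.F ^ k) := by
        rw [heq2]; group
      have h4 := mul_left_cancel h3
      have h5 : (1 : Aff 3) * E.F ^ k = (D.F ^ j * E.F ^ δ) * E.F ^ k := by
        rw [one_mul]; exact h4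
      exact (mul_right_cancel h5).symm
    have hE0 := E.iter p₂ hp₂ δ 0 0 0
    simp only [mul_zero, zero_smul, add_zero, zero_add, mul_one] at hE0
    have hE1 := E.iter p₂ hp₂ δ 1 0 0
    simp only [mul_zero, zero_smul, add_zero, zero_add, mul_one] at hE1
    rcases Nat.eq_zero_or_pos j with hj0 | hjpos
    · have hEδ : E.F ^ δ = 1 := by
        have h := hone
        rwa [hj0, pow_zero, one_mul] at h
      rw [hEδ] at hE0
      have hE0' : p₂ = p₂ + ((δ : ℝ) * E.α) • E.W := hE0
      have hu : ((δ : ℝ) * E.α) • E.W = 0 := add_eq_left.mp hE0'.symm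
      rcases smul_eq_zero.mp hu with h | h
      · exact (mul_ne_zero hδR (ne_of_lt hαE)) h
      · exact E.Wne h
    · have hj0' : j ≠ 0 := Nat.pos_iff_ne_zero.mp hjpos
      have hid : ∀ x : V 3, (D.F ^ j) ((E.F ^ δ) x) = x := by
        intro x
        have hx : (D.F ^ j * E.F ^ δ) x = (1 : Aff 3) x := by rw [hone]
        exact hx
      have hcov := D.cocycle_pow j ((E.F ^ δ) p₂)
      rw [hid, hE0] at hcov
      have hcov1 := D.cocycle_pow j ((E.F ^ δ) (p₂ + (1:ℝ) • E.P))
      rw [hid, hE1] at hcov1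
      rw [B3_add_left, B3_smul_left] at hcov
      rw [B3_add_left, B3_smul_left, B3_add_left, B3_add_left, B3_smul_left,
        B3_smul_left] at hcov1
      have hνδ : 1 < E.l ^ δ := one_lt_pow₀ E.hl hδ0
      have hfac : (E.l ^ δ - 1) * B3 E.P D.W = 0 := by linarith [hcov, hcov1]
      have hBvW : B3 E.P D.W = 0 :=
        (mul_eq_zero.mp hfac).resolve_left (by linarith)
      have hc0v : D.c0 E.P = 0 := hBvW
      obtain ⟨av, hav⟩ : ∃ a : ℝ, a = D.cp E.P := ⟨_, rfl⟩
      obtain ⟨bv, hbv⟩ : ∃ b : ℝ, b = D.cm E.P := ⟨_, rfl⟩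
      have havne : av ≠ 0 := by rw [hav]; exact hpv
      have hvrepr := D.repr E.P
      rw [hc0v, zero_smul, add_zero, ← hav, ← hbv] at hvrepr
      have hv2 : B3 (av • D.P + bv • D.M) (av • D.P + bv • D.M) = 0 := by
        rw [← hvrepr]; exact E.BPP
      have hbv0 : bv = 0 := by
        rw [B3_add_left, B3_smul_left, B3_smul_left, B3_add_right, B3_add_right,
          B3_smul_right, B3_smul_right, B3_smul_right, B3_smul_right] at hv2
        rw [D.BPP, D.BMM, B3_comm D.M D.P] at hv2
        have h3 : av * (bv * B3 D.P D.M) = 0 := by nlinarith [hv2]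
        rcases mul_eq_zero.mp h3 with h4 | h4
        · exact absurd h4 havne
        · rcases mul_eq_zero.mp h4 with h5 | h5
          · exact h5
          · exact absurd h5 hκD
      have hvP : E.P = av • D.P := by
        rw [hvrepr, hbv0, zero_smul, add_zero]
      have hq1 : (D.F ^ j) ((E.F ^ δ) p₂) = p₂ := hid p₂
      have hq2 : (D.F ^ j) ((E.F ^ δ) (p₂ + (1:ℝ) • E.P)) = p₂ + (1:ℝ) • E.P :=
        hid (p₂ + (1:ℝ) • E.P)
      have hE1' : (E.F ^ δ) (p₂ + (1:ℝ) • E.P)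
          = (E.F ^ δ) p₂ + (E.l ^ δ * av) • D.P := by
        rw [hE1, hE0, hvP, smul_smul]
        module
      rw [hE1', D.iter_shift p₁ hp₁ j _ _, hq1] at hq2
      have hcanc : (D.l ^ j * (E.l ^ δ * av)) • D.P = av • D.P := by
        have h6 : p₂ + (D.l ^ j * (E.l ^ δ * av)) • D.P = p₂ + av • D.P := by
          rw [hq2, hvP, one_smul]
        exact add_left_cancel h6
      have h7 : D.l ^ j * (E.l ^ δ * av) = av :=
        smul_cancel _ _ _ D.Pne hcanc
      have h8 : 1 < D.l ^ j := one_lt_pow₀ D.hl hj0'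
      have h10 : (D.l ^ j * E.l ^ δ - 1) * av = 0 := by linear_combination h7
      rcases mul_eq_zero.mp h10 with h11 | h11
      · nlinarith [h8, hνδ]
      · exact havne h11
  -- ===== bounds =====
  obtain ⟨K₁, hK1⟩ : ∃ x : ℝ, x = 2 * (|ee| + D.α) / (-E.α) := ⟨_, rfl⟩
  obtain ⟨K₂, hK2⟩ : ∃ x : ℝ, x = 2 * (|A₁| + |A₂|) / ((E.l - 1) ^ 2 * |D.cp E.P|) := ⟨_, rfl⟩
  have hpva : 0 < |D.cp E.P| := abs_pos.mpr hpv
  have hK1nn : 0 ≤ K₁ := by rw [hK1]; positivity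
  have hK2nn : 0 ≤ K₂ := by rw [hK2]; positivity
  obtain ⟨k₀, hk0⟩ : ∃ x : ℕ, x = ⌈max K₁ K₂⌉₊ + 3 := ⟨_, rfl⟩
  have hkR : ∀ k : ℕ, k₀ ≤ k → K₁ + 3 ≤ (k:ℝ) ∧ K₂ + 3 ≤ (k:ℝ) := by
    intro k hk
    rw [hk0] at hk
    have h1 : ((⌈max K₁ K₂⌉₊ + 3 : ℕ) : ℝ) ≤ (k : ℝ) := Nat.cast_le.mpr hk
    push_cast at h1
    have h2 : max K₁ K₂ ≤ (⌈max K₁ K₂⌉₊ : ℝ) := Nat.le_ceil _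
    constructor
    · linarith [le_max_left K₁ K₂]
    · linarith [le_max_right K₁ K₂]
  have hk3 : ∀ k : ℕ, k₀ ≤ k → (3:ℝ) ≤ (k:ℝ) := by
    intro k hk; have := (hkR k hk).1; linarith [hK1nn]
  have hyk : ∀ k : ℕ, k₀ ≤ k → D.α ≤ -ee - k * E.α ∧ (-E.α) * k / 2 ≤ -ee - k * E.α := by
    intro k hk
    have h1 := (hkR k hk).1
    have hK1mul : K₁ * (-E.α) = 2 * (|ee| + D.α) := by
      rw [hK1, div_mul_cancel₀ _ (ne_of_gt hnαE)]
    have hprod : (K₁ + 3) * (-E.α) ≤ (k:ℝ) * (-E.α) :=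
      mul_le_mul_of_nonneg_right h1 (le_of_lt hnαE)
    have hexp : (K₁ + 3) * (-E.α) = 2 * (|ee| + D.α) + 3 * (-E.α) := by
      linear_combination hK1mul
    have hk2 : 2 * (|ee| + D.α) + 3 * (-E.α) ≤ (k:ℝ) * (-E.α) := by
      rw [← hexp]; exact hprod
    constructor
    · nlinarith [le_abs_self ee, neg_abs_le ee, hk2]
    · nlinarith [le_abs_self ee, neg_abs_le ee, hk2]
  have hmk : ∀ k : ℕ, k₀ ≤ k →
      (-ee - k * E.α) / D.α ≤ (mfun k : ℝ)
        ∧ (mfun k : ℝ) < (-ee - k * E.α) / D.α + 1 ∧ (1:ℝ) ≤ (mfun k : ℝ) := by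
    intro k hk
    have hy1 := (hyk k hk).1
    have hy0 : 0 ≤ (-ee - k * E.α) / D.α := div_nonneg (by linarith) (le_of_lt hαD)
    simp only [hmfun]
    refine ⟨Nat.le_ceil _, Nat.ceil_lt_add_one hy0, ?_⟩
    have h2 : (1:ℝ) ≤ (-ee - k * E.α) / D.α := by
      rw [le_div_iff₀ hαD]; linarith
    exact le_trans h2 (Nat.le_ceil _)
  have hθb : ∀ k : ℕ, k₀ ≤ k →
      0 ≤ (ee + k * E.α) + (mfun k) * D.α ∧ (ee + k * E.α) + (mfun k) * D.α ≤ D.α := by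
    intro k hk
    obtain ⟨hm1, hm2, _⟩ := hmk k hk
    have hdm : ((-ee - k * E.α) / D.α) * D.α = -ee - k * E.α :=
      div_mul_cancel₀ _ (ne_of_gt hαD)
    have hA : -ee - k * E.α ≤ (mfun k : ℝ) * D.α := by
      calc -ee - k * E.α = ((-ee - k * E.α) / D.α) * D.α := hdm.symm
        _ ≤ (mfun k : ℝ) * D.α := mul_le_mul_of_nonneg_right hm1 (le_of_lt hαD)
    have hB : (mfun k : ℝ) * D.α ≤ (-ee - k * E.α) + D.α := by
      have h2' := mul_le_mul_of_nonneg_right (le_of_lt hm2) (le_of_lt hαD)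
      have h2'' : ((-ee - k * E.α) / D.α + 1) * D.α = (-ee - k * E.α) + D.α := by
        linear_combination hdm
      linarith [h2', h2'']
    constructor
    · linarith [hA]
    · linarith [hB]
  have htb : ∀ k : ℕ, k₀ ≤ k → |tfun k| ≤ 1 := by
    intro k hk
    have hK2k := (hkR k hk).2
    have hk3' := hk3 k hk
    have hq := quad_bernoulli (E.l - 1) (le_of_lt hdE) k
    rw [show (1 + (E.l - 1)) = E.l from by ring] at hq
    have hK2mul : K₂ * ((E.l - 1) ^ 2 * |D.cp E.P|) = 2 * (|A₁| + |A₂|) := by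
      rw [hK2]; field_simp
    have h1 : K₂ * (1 + k) ≤ (k:ℝ) * ((k:ℝ) - 1) := by nlinarith [hK2nn, hK2k]
    have c1 : |A₁| + k * |A₂| ≤ (1 + (k:ℝ)) * (|A₁| + |A₂|) := by
      nlinarith [abs_nonneg A₁, abs_nonneg A₂, Nat.cast_nonneg (α := ℝ) k]
    have c3 : (1 + (k:ℝ)) * (|A₁| + |A₂|)
        ≤ (k:ℝ) * ((k:ℝ) - 1) * ((E.l - 1) ^ 2 * |D.cp E.P|) / 2 := by
      nlinarith [mul_le_mul_of_nonneg_right h1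
        (by positivity : (0:ℝ) ≤ (E.l - 1) ^ 2 * |D.cp E.P|), hK2mul]
    have c4 : (k:ℝ) * ((k:ℝ) - 1) * ((E.l - 1) ^ 2 * |D.cp E.P|) / 2
        ≤ E.l ^ k * |D.cp E.P| := by
      nlinarith [hq, hpva, mul_nonneg (Nat.cast_nonneg (α := ℝ) k) (le_of_lt hdE)]
    simp only [htfun]
    rw [abs_div, abs_neg, abs_mul, abs_of_pos (pow_pos E.lpos k),
      div_le_one (mul_pos (pow_pos E.lpos k) hpva)]
    have habs2 : |A₁ + k * A₂| ≤ |A₁| + k * |A₂| := by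
      calc |A₁ + k * A₂| ≤ |A₁| + |(k:ℝ) * A₂| := abs_add_le _ _
        _ = |A₁| + k * |A₂| := by rw [abs_mul, abs_of_nonneg (Nat.cast_nonneg (α := ℝ) k)]
    linarith [c1, c3, c4, habs2]
  obtain ⟨R₁, hR1⟩ : ∃ x : ℝ, x = (|Q₁| + |Q₂|) * (2 * D.α) / ((-E.α) * (D.l - 1)) := ⟨_, rfl⟩
  have hbb : ∀ k : ℕ, k₀ ≤ k → |(D.l⁻¹) ^ (mfun k) * (Q₁ + k * Q₂)| ≤ R₁ := by
    intro k hk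
    have hk3' := hk3 k hk
    have hkpos : (0:ℝ) < k := by linarith
    obtain ⟨hm1, _, hm3⟩ := hmk k hk
    have hy2 := (hyk k hk).2
    have hmge : (-E.α) * k / (2 * D.α) ≤ (mfun k : ℝ) := by
      have h2 : (-E.α) * k / 2 / D.α ≤ (-ee - k * E.α) / D.α := by gcongr
      rw [div_div] at h2
      exact le_trans h2 hm1
    have hlam : 1 + (mfun k : ℝ) * (D.l - 1) ≤ D.l ^ (mfun k) := by
      have h := one_add_mul_le_pow (show (-2:ℝ) ≤ D.l - 1 by linarith [D.hl]) (mfun k)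
      rwa [show (1 + (D.l - 1)) = D.l from by ring] at h
    have hlam2 : (-E.α) * k * (D.l - 1) / (2 * D.α) ≤ D.l ^ (mfun k) := by
      have h2 : ((-E.α) * k / (2 * D.α)) * (D.l - 1) ≤ (mfun k : ℝ) * (D.l - 1) :=
        mul_le_mul_of_nonneg_right hmge (le_of_lt hdD)
      calc (-E.α) * k * (D.l - 1) / (2 * D.α)
          = ((-E.α) * k / (2 * D.α)) * (D.l - 1) := by ring
        _ ≤ (mfun k : ℝ) * (D.l - 1) := h2
        _ ≤ D.l ^ (mfun k) := by linarith [hlam]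
    have hpos3 : 0 < (-E.α) * k * (D.l - 1) / (2 * D.α) :=
      div_pos (mul_pos (mul_pos hnαE hkpos) hdD) (by linarith [hαD])
    have heq2 : |(D.l⁻¹) ^ (mfun k) * (Q₁ + k * Q₂)| = |Q₁ + k * Q₂| / D.l ^ (mfun k) := by
      rw [abs_mul, inv_pow, abs_inv, abs_of_pos (pow_pos D.lpos _), inv_mul_eq_div]
    rw [heq2]
    have hbnum : |Q₁ + k * Q₂| ≤ k * (|Q₁| + |Q₂|) := by
      calc |Q₁ + k * Q₂| ≤ |Q₁| + |(k:ℝ) * Q₂| := abs_add_le _ _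
        _ = |Q₁| + k * |Q₂| := by rw [abs_mul, abs_of_nonneg (Nat.cast_nonneg (α := ℝ) k)]
        _ ≤ k * (|Q₁| + |Q₂|) := by nlinarith [abs_nonneg Q₁, abs_nonneg Q₂]
    have hstep : |Q₁ + k * Q₂| / D.l ^ (mfun k)
        ≤ (k * (|Q₁| + |Q₂|)) / ((-E.α) * k * (D.l - 1) / (2 * D.α)) :=
      div_le_div₀ (by positivity) hbnum hpos3 hlam2
    have hkne : (k:ℝ) ≠ 0 := ne_of_gt hkpos
    have hfin : ((k:ℝ) * (|Q₁| + |Q₂|)) / ((-E.α) * k * (D.l - 1) / (2 * D.α)) = R₁ := by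
      rw [show (-E.α) * (k:ℝ) * (D.l - 1) / (2 * D.α)
            = (k:ℝ) * ((-E.α) * (D.l - 1) / (2 * D.α)) from by ring,
        mul_div_mul_left _ _ hkne, div_div_eq_mul_div, hR1]
    rw [hfin] at hstep
    exact hstep
  -- ===== conclusion =====
  refine glue S (fun n => D.F ^ (mfun (k₀ + n)) * E.F ^ (k₀ + n))
    (fun n => mul_mem (pow_mem hDS _) (pow_mem hES _)) ?_
    (fun n => p₂ + tfun (k₀ + n) • E.P) p₂ p₁ ‖E.P‖ (R₁ * ‖D.M‖ + D.α * ‖D.W‖) ?_ ?_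
  · intro m n hmn
    by_contra hne
    rcases Nat.lt_or_ge m n with h | h
    · exact haux (k₀ + m) (k₀ + n) (by omega) hmn
    · have h2 : n < m := by omega
      exact haux (k₀ + n) (k₀ + m) (by omega) hmn.symm
  · intro n
    rw [dist_eq_norm]
    have h1 : ∀ z u : V 3, z + u - z = u := fun z u => by abel
    rw [h1, norm_smul]
    have h2 := htb (k₀ + n) (by omega)
    calc ‖tfun (k₀ + n)‖ * ‖E.P‖ ≤ 1 * ‖E.P‖ := by
          apply mul_le_mul_of_nonneg_right _ (norm_nonneg _)
          rwa [Real.norm_eq_abs]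
      _ = ‖E.P‖ := one_mul _
  · intro n
    rw [hKC (k₀ + n), dist_eq_norm]
    have h1 : ∀ (z u w' : V 3), z + u + w' - z = u + w' := fun z u w' => by abel
    rw [h1]
    refine le_trans (norm_add_le _ _) ?_
    rw [norm_smul, norm_smul, Real.norm_eq_abs, Real.norm_eq_abs]
    have h4 := hbb (k₀ + n) (by omega)
    have h5 := hθb (k₀ + n) (by omega)
    gcongr
    · rw [abs_of_nonneg h5.1]; exact h5.2

end OSL


open OSL

/-- (Margulis's Opposite Sign Lemma.) If `g, h` are affine transformations of `ℝ³` with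
hyperbolic Lorentzian linear parts and Margulis invariants of opposite (or zero) sign, then
the group they generate does not act properly discontinuously on `ℝ³`. -/
theorem opposite_sign_lemma
    (g h : Aff 3) (lg lh : ℝ) (hlg : 1 < lg) (hlh : 1 < lh)
    (wgp wgm wg whp whm wh : V 3)
    -- the linear parts preserve the Lorentzian form
    (hBg : ∀ v w : V 3, B3 (g.linear v) (g.linear w) = B3 v w)
    (hBh : ∀ v w : V 3, B3 (h.linear v) (h.linear w) = B3 v w)
    -- hyperbolicity data for g
    (hgp : g.linear wgp = lg • wgp)
    (hgm : g.linear wgm = lg⁻¹ • wgm)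
    (hgw : g.linear wg = wg)
    (hgunit : B3 wg wg = 1)
    (hgpm : B3 wgp wgm < 0)
    (hgdet : 0 < (colMatrix wgp wgm wg).det)
    -- hyperbolicity data for h
    (hhp : h.linear whp = lh • whp)
    (hhm : h.linear whm = lh⁻¹ • whm)
    (hhw : h.linear wh = wh)
    (hhunit : B3 wh wh = 1)
    (hhpm : B3 whp whm < 0)
    (hhdet : 0 < (colMatrix whp whm wh).det)
    -- the Margulis invariants α(g) = B(g(0), w_g), α(h) = B(h(0), w_h) have opposite signs
    (hsign : B3 (g 0) wg * B3 (h 0) wh ≤ 0) :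
    ¬ ProperlyDisc
        (fun (γ : Subgroup.closure ({g, h} : Set (Aff 3))) (x : V 3) => (γ : Aff 3) x) := by
  have hgmem : g ∈ Subgroup.closure ({g, h} : Set (Aff 3)) :=
    Subgroup.subset_closure (Set.mem_insert _ _)
  have hhmem : h ∈ Subgroup.closure ({g, h} : Set (Aff 3)) :=
    Subgroup.subset_closure (Set.mem_insert_iff.mpr (Or.inr rfl))
  let Dg : HypData := ⟨g, wgp, wgm, wg, lg, hlg, hBg, hgp, hgm, hgw, hgunit, hgpm, hgdet⟩
  let Dh : HypData := ⟨h, whp, whm, wh, lh, hlh, hBh, hhp, hhm, hhw, hhunit, hhpm, hhdet⟩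
  have hDgα : Dg.α = B3 (g 0) wg := rfl
  have hDhα : Dh.α = B3 (h 0) wh := rfl
  rcases lt_trichotomy (B3 (g 0) wg) 0 with ha | ha | ha
  · -- α(g) < 0 hence α(h) ≥ 0
    rcases lt_trichotomy (B3 (h 0) wh) 0 with hb | hb | hb
    · exfalso; nlinarith
    · exact zerocase _ Dh hhmem (by rw [hDhα, hb])
    · -- outer Dh (positive), inner Dg (negative)
      by_cases ht : B3 wgp whm ≠ 0
      · exact master _ Dh Dg hhmem hgmem (by rw [hDhα]; exact hb) (by rw [hDgα]; exact ha) ht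
      · push_neg at ht
        obtain ⟨c, hc⟩ := null_parallel whm wgp Dh.BMM Dg.BPP
          (by rw [B3_comm]; exact ht) Dh.Mne
        have hcne : c ≠ 0 := by
          intro h0; apply Dg.Pne; show wgp = 0; rw [hc, h0, zero_smul]
        have ht' : B3 wgp whp ≠ 0 := by
          rw [hc, B3_smul_left, B3_comm]
          exact mul_ne_zero hcne (ne_of_lt hhpm)
        exact master _ Dh.inv Dg (inv_mem hhmem) hgmem (by rw [Dh.inv_α, hDhα]; exact hb)
          (by rw [hDgα]; exact ha) ht'
  · exact zerocase _ Dg hgmem (by rw [hDgα, ha])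
  · -- α(g) > 0 hence α(h) ≤ 0
    rcases lt_trichotomy (B3 (h 0) wh) 0 with hb | hb | hb
    · -- outer Dg (positive), inner Dh (negative)
      by_cases ht : B3 whp wgm ≠ 0
      · exact master _ Dg Dh hgmem hhmem (by rw [hDgα]; exact ha) (by rw [hDhα]; exact hb) ht
      · push_neg at ht
        obtain ⟨c, hc⟩ := null_parallel wgm whp Dg.BMM Dh.BPP
          (by rw [B3_comm]; exact ht) Dg.Mne
        have hcne : c ≠ 0 := by
          intro h0; apply Dh.Pne; show whp = 0; rw [hc, h0, zero_smul]
        have ht' : B3 whp wgp ≠ 0 := by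
          rw [hc, B3_smul_left, B3_comm]
          exact mul_ne_zero hcne (ne_of_lt hgpm)
        exact master _ Dg.inv Dh (inv_mem hgmem) hhmem (by rw [Dg.inv_α, hDgα]; exact ha)
          (by rw [hDhα]; exact hb) ht'
    · exact zerocase _ Dh hhmem (by rw [hDhα, hb])
    · exfalso; nlinarith
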